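/- Let μ be a probability measure on a measurable space Ω', let 𝒜 and 𝒱 be finite types, and let f : Ω' → 𝒜 → ℝ and g : Ω' → 𝒱 → ℝ be bounded measurable functions (each coordinate function measurable and bounded). Then ∑_{a ∈ 𝒜} ∑_{v ∈ 𝒱} | ∫ (f(y)(a) − ∫ f(y')(a) dμ(y')) · (g(y)(v) − ∫ g(y')(v) dμ(y')) dμ(y) | ≤ ∫ ( ∫ ∑_{a ∈ 𝒜} |f(y)(a) − f(y')(a)| dμ(y') ) · ( ∫ ∑_{v ∈ 𝒱} |g(y)(v) − g(y')(v)| dμ(y') ) dμ(y). -/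

import Mathlib

open MeasureTheory

/-- Covariance-type inequality: the summed absolute covariances of bounded measurable
coordinate functions are bounded by the integral of the product of the mean ℓ1
deviations from their averages. -/
theorem covariance_type_inequality
    {Ω' : Type*} [MeasurableSpace Ω'] (μ : Measure Ω') [IsProbabilityMeasure μ]
    {𝒜 𝒱 : Type*} [Fintype 𝒜] [Fintype 𝒱]
    (f : Ω' → 𝒜 → ℝ) (g : Ω' → 𝒱 → ℝ)
    (hfm : ∀ a : 𝒜, Measurable fun y => f y a)
    (hgm : ∀ v : 𝒱, Measurable fun y => g y v)
    (hfb : ∃ Cf : ℝ, ∀ y a, |f y a| ≤ Cf)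
    (hgb : ∃ Cg : ℝ, ∀ y v, |g y v| ≤ Cg) :
    ∑ a : 𝒜, ∑ v : 𝒱,
        |∫ y, (f y a - ∫ y', f y' a ∂μ) * (g y v - ∫ y', g y' v ∂μ) ∂μ|
      ≤ ∫ y, (∫ y', ∑ a : 𝒜, |f y a - f y' a| ∂μ)
              * (∫ y', ∑ v : 𝒱, |g y v - g y' v| ∂μ) ∂μ := by
  have habs : ∀ h : Ω' → ℝ, |∫ y, h y ∂μ| ≤ ∫ y, |h y| ∂μ := fun h => by
    simpa [Real.norm_eq_abs] using norm_integral_le_integral_norm (μ := μ) h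
  obtain ⟨Cf, hCf0⟩ := hfb
  obtain ⟨Cg, hCg0⟩ := hgb
  set Cf' : ℝ := max Cf 0 with hCf'def
  set Cg' : ℝ := max Cg 0 with hCg'def
  have hCf'nn : (0:ℝ) ≤ Cf' := le_max_right _ _
  have hCg'nn : (0:ℝ) ≤ Cg' := le_max_right _ _
  have hCf : ∀ y a, |f y a| ≤ Cf' := fun y a => (hCf0 y a).trans (le_max_left _ _)
  have hCg : ∀ y v, |g y v| ≤ Cg' := fun y v => (hCg0 y v).trans (le_max_left _ _)
  set F : 𝒜 → ℝ := fun a => ∫ y', f y' a ∂μ with hF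
  set G : 𝒱 → ℝ := fun v => ∫ y', g y' v ∂μ with hG
  have intf : ∀ a, Integrable (fun y => f y a) μ := fun a =>
    (integrable_const Cf').mono' (hfm a).aestronglyMeasurable
      (Filter.Eventually.of_forall fun y => by simpa using hCf y a)
  have intg : ∀ v, Integrable (fun y => g y v) μ := fun v =>
    (integrable_const Cg').mono' (hgm v).aestronglyMeasurable
      (Filter.Eventually.of_forall fun y => by simpa using hCg y v)
  -- deviation bound for f
  have hFb : ∀ a, |F a| ≤ Cf' := by
    intro a
    calc |F a| ≤ ∫ y', |f y' a| ∂μ := habs _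
    _ ≤ ∫ _y', Cf' ∂μ := integral_mono (intf a).abs (integrable_const _) (fun y => hCf y a)
    _ = Cf' := by simp
  have hGb : ∀ v, |G v| ≤ Cg' := by
    intro v
    calc |G v| ≤ ∫ y', |g y' v| ∂μ := habs _
    _ ≤ ∫ _y', Cg' ∂μ := integral_mono (intg v).abs (integrable_const _) (fun y => hCg y v)
    _ = Cg' := by simp
  have hdevf : ∀ y a, |f y a - F a| ≤ ∫ y', |f y a - f y' a| ∂μ := by
    intro y a
    have h1 : f y a - F a = ∫ y', (f y a - f y' a) ∂μ := by
      rw [integral_sub (integrable_const _) (intf a), integral_const]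
      simp
      rfl
    rw [h1]
    exact habs _
  have hdevg : ∀ y v, |g y v - G v| ≤ ∫ y', |g y v - g y' v| ∂μ := by
    intro y v
    have h1 : g y v - G v = ∫ y', (g y v - g y' v) ∂μ := by
      rw [integral_sub (integrable_const _) (intg v), integral_const]
      simp
      rfl
    rw [h1]
    exact habs _
  have intdf : ∀ y a, Integrable (fun y' => |f y a - f y' a|) μ := fun y a =>
    ((integrable_const _).sub (intf a)).abs
  have intdg : ∀ y v, Integrable (fun y' => |g y v - g y' v|) μ := fun y v =>
    ((integrable_const _).sub (intg v)).abs
  -- integrable product terms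
  have intprod : ∀ (a : 𝒜) (v : 𝒱),
      Integrable (fun y => |f y a - F a| * |g y v - G v|) μ := by
    intro a v
    refine (integrable_const ((Cf' + Cf') * (Cg' + Cg'))).mono'
      ((((hfm a).sub measurable_const).abs.mul
        ((hgm v).sub measurable_const).abs).aestronglyMeasurable)
      (Filter.Eventually.of_forall fun y => ?_)
    have h1 : |f y a - F a| ≤ Cf' + Cf' :=
      (abs_sub _ _).trans (add_le_add (hCf y a) (hFb a))
    have h2 : |g y v - G v| ≤ Cg' + Cg' :=
      (abs_sub _ _).trans (add_le_add (hCg y v) (hGb v))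
    have := mul_le_mul h1 h2 (abs_nonneg _) (by positivity)
    simpa [abs_mul, abs_of_nonneg (abs_nonneg (f y a - F a)),
      abs_of_nonneg (abs_nonneg (g y v - G v))] using this
  -- step 1: pull abs inside, get product of abs
  have step1 : ∀ (a : 𝒜) (v : 𝒱),
      |∫ y, (f y a - F a) * (g y v - G v) ∂μ|
        ≤ ∫ y, |f y a - F a| * |g y v - G v| ∂μ := by
    intro a v
    calc |∫ y, (f y a - F a) * (g y v - G v) ∂μ|
        ≤ ∫ y, |(f y a - F a) * (g y v - G v)| ∂μ := habs _
    _ = ∫ y, |f y a - F a| * |g y v - G v| ∂μ := by simp [abs_mul]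
  -- main chain
  calc ∑ a : 𝒜, ∑ v : 𝒱, |∫ y, (f y a - F a) * (g y v - G v) ∂μ|
      ≤ ∑ a : 𝒜, ∑ v : 𝒱, ∫ y, |f y a - F a| * |g y v - G v| ∂μ := by
        exact Finset.sum_le_sum fun a _ => Finset.sum_le_sum fun v _ => step1 a v
  _ = ∑ a : 𝒜, ∫ y, ∑ v : 𝒱, |f y a - F a| * |g y v - G v| ∂μ := by
        refine Finset.sum_congr rfl fun a _ => ?_
        rw [← integral_finset_sum _ fun v _ => intprod a v]
  _ = ∫ y, ∑ a : 𝒜, ∑ v : 𝒱, |f y a - F a| * |g y v - G v| ∂μ := by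
        rw [← integral_finset_sum _ fun a _ =>
          integrable_finset_sum _ fun v _ => intprod a v]
  _ = ∫ y, (∑ a : 𝒜, |f y a - F a|) * (∑ v : 𝒱, |g y v - G v|) ∂μ := by
        congr 1; ext y
        rw [Finset.sum_mul_sum]
  _ ≤ ∫ y, (∫ y', ∑ a : 𝒜, |f y a - f y' a| ∂μ)
              * (∫ y', ∑ v : 𝒱, |g y v - g y' v| ∂μ) ∂μ := by
        -- pointwise bound
        have hpt : ∀ y, (∑ a : 𝒜, |f y a - F a|) * (∑ v : 𝒱, |g y v - G v|)
            ≤ (∫ y', ∑ a : 𝒜, |f y a - f y' a| ∂μ)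
              * (∫ y', ∑ v : 𝒱, |g y v - g y' v| ∂μ) := by
          intro y
          have h1 : ∑ a : 𝒜, |f y a - F a| ≤ ∫ y', ∑ a : 𝒜, |f y a - f y' a| ∂μ := by
            rw [integral_finset_sum _ fun a _ => intdf y a]
            exact Finset.sum_le_sum fun a _ => hdevf y a
          have h2 : ∑ v : 𝒱, |g y v - G v| ≤ ∫ y', ∑ v : 𝒱, |g y v - g y' v| ∂μ := by
            rw [integral_finset_sum _ fun v _ => intdg y v]
            exact Finset.sum_le_sum fun v _ => hdevg y v
          have hnn2 : (0:ℝ) ≤ ∑ v : 𝒱, |g y v - G v| :=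
            Finset.sum_nonneg fun v _ => abs_nonneg _
          have hnn1 : (0:ℝ) ≤ ∫ y', ∑ a : 𝒜, |f y a - f y' a| ∂μ :=
            le_trans (Finset.sum_nonneg fun a _ => abs_nonneg _) h1
          exact mul_le_mul h1 h2 hnn2 hnn1
        -- measurability of the RHS integrand
        have hmF : StronglyMeasurable fun y =>
            ∫ y', ∑ a : 𝒜, |f y a - f y' a| ∂μ := by
          apply StronglyMeasurable.integral_prod_right'
            (f := fun p : Ω' × Ω' => ∑ a : 𝒜, |f p.1 a - f p.2 a|)
          exact (Finset.measurable_sum _ fun a _ =>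
            (((hfm a).comp measurable_fst).sub ((hfm a).comp measurable_snd)).abs).stronglyMeasurable
        have hmG : StronglyMeasurable fun y =>
            ∫ y', ∑ v : 𝒱, |g y v - g y' v| ∂μ := by
          apply StronglyMeasurable.integral_prod_right'
            (f := fun p : Ω' × Ω' => ∑ v : 𝒱, |g p.1 v - g p.2 v|)
          exact (Finset.measurable_sum _ fun v _ =>
            (((hgm v).comp measurable_fst).sub ((hgm v).comp measurable_snd)).abs).stronglyMeasurable
        -- bounds on the parametric integrals
        have hbF : ∀ y, |∫ y', ∑ a : 𝒜, |f y a - f y' a| ∂μ|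
            ≤ (Fintype.card 𝒜 : ℝ) * (Cf' + Cf') := by
          intro y
          refine (habs _).trans (le_of_le_of_eq
            (integral_mono (integrable_finset_sum _ fun a _ => intdf y a).abs
              (integrable_const ((Fintype.card 𝒜 : ℝ) * (Cf' + Cf'))) fun y' => ?_)
            (by simp))
          rw [abs_of_nonneg (Finset.sum_nonneg fun a _ => abs_nonneg _)]
          calc ∑ a : 𝒜, |f y a - f y' a| ≤ ∑ _a : 𝒜, (Cf' + Cf') :=
                Finset.sum_le_sum fun a _ =>
                  (abs_sub _ _).trans (add_le_add (hCf y a) (hCf y' a))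
          _ = (Fintype.card 𝒜 : ℝ) * (Cf' + Cf') := by
                simp [Finset.sum_const, nsmul_eq_mul, mul_add]
        have hbG : ∀ y, |∫ y', ∑ v : 𝒱, |g y v - g y' v| ∂μ|
            ≤ (Fintype.card 𝒱 : ℝ) * (Cg' + Cg') := by
          intro y
          refine (habs _).trans (le_of_le_of_eq
            (integral_mono (integrable_finset_sum _ fun v _ => intdg y v).abs
              (integrable_const ((Fintype.card 𝒱 : ℝ) * (Cg' + Cg'))) fun y' => ?_)
            (by simp))
          rw [abs_of_nonneg (Finset.sum_nonneg fun v _ => abs_nonneg _)]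
          calc ∑ v : 𝒱, |g y v - g y' v| ≤ ∑ _v : 𝒱, (Cg' + Cg') :=
                Finset.sum_le_sum fun v _ =>
                  (abs_sub _ _).trans (add_le_add (hCg y v) (hCg y' v))
          _ = (Fintype.card 𝒱 : ℝ) * (Cg' + Cg') := by
                simp [Finset.sum_const, nsmul_eq_mul, mul_add]
        have hintR : Integrable (fun y => (∫ y', ∑ a : 𝒜, |f y a - f y' a| ∂μ)
            * (∫ y', ∑ v : 𝒱, |g y v - g y' v| ∂μ)) μ := by
          refine (integrable_const (((Fintype.card 𝒜 : ℝ) * (Cf' + Cf'))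
            * ((Fintype.card 𝒱 : ℝ) * (Cg' + Cg')))).mono'
            (hmF.mul hmG).aestronglyMeasurable
            (Filter.Eventually.of_forall fun y => ?_)
          rw [Real.norm_eq_abs, abs_mul]
          exact mul_le_mul (hbF y) (hbG y) (abs_nonneg _)
            (by positivity)
        refine integral_mono_of_nonneg (Filter.Eventually.of_forall fun y =>
          mul_nonneg (Finset.sum_nonneg fun a _ => abs_nonneg _)
            (Finset.sum_nonneg fun v _ => abs_nonneg _)) hintR
          (Filter.Eventually.of_forall hpt)
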